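/- Let X have the Laplace density ρ(x) = ½ exp(−|x|) on ℝ and let Z ~ N(0,1) be independent of X. Let p, q : [0,T] → [0,∞) be continuous with p(0) = q(0) = 0 and p(t), q(t) > 0 on (0,ε) for some ε > 0, and suppose lim_{t→0⁺} q(t)²/p(t) = c < ∞. Let y : [0,T] → ℝ be continuous with lim_{t→0⁺} y(t) = y₀ and |y₀| > c. Then lim_{t→0⁺} p(t) · E[X | p(t)X + q(t)Z = y(t)] = (1 − c/|y₀|) y₀, where E[X | pX + qZ = y] denotes the ratio (∫ x exp(−(y−px)²/(2q²)) exp(−|x|) dx) / (∫ exp(−(y−px)²/(2q²)) exp(−|x|) dx). -/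

import Mathlib

open MeasureTheory Set Filter
open scoped Topology

noncomputable section

/-- The conditional expectation `E[X | pX + qZ = y]` for `X` Laplace and `Z` standard normal,
defined as a ratio of integrals over `ℝ`. -/
def lapCondExp (p q y : ℝ) : ℝ :=
  (∫ x : ℝ, x * Real.exp (-(y - p * x) ^ 2 / (2 * q ^ 2)) * Real.exp (-|x|)) /
    (∫ x : ℝ, Real.exp (-(y - p * x) ^ 2 / (2 * q ^ 2)) * Real.exp (-|x|))

def lapK : ℝ := ∫ v : ℝ, |v| * Real.exp (-(1/2) * v ^ 2)

lemma key (p q y : ℝ) (hp : 0 < p) (hq : 0 < q) (hm : 0 < y - q ^ 2 / p) :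
    |p * lapCondExp p q y - (y - q ^ 2 / p)| ≤ q * lapK := by
  have hp0 : p ≠ 0 := hp.ne'
  have hq0 : q ≠ 0 := hq.ne'
  set m : ℝ := y - q ^ 2 / p with hmdef
  set C : ℝ := Real.exp (-q ^ 2 / (2 * p ^ 2) - m / p) with hC
  set h : ℝ → ℝ := fun v => Real.exp ((q * v + m - |q * v + m|) / p) with hh
  have h_pos : ∀ v, 0 < h v := fun v => Real.exp_pos _
  have h_le1 : ∀ v, h v ≤ 1 := by
    intro v
    rw [hh, ← Real.exp_zero]
    apply Real.exp_le_exp.mpr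
    apply div_nonpos_of_nonpos_of_nonneg _ hp.le
    simp [le_abs_self]
  have h_cont : Continuous h := by
    apply Real.continuous_exp.comp
    exact (((continuous_const.mul continuous_id).add continuous_const).sub
      ((continuous_const.mul continuous_id).add continuous_const).abs).div_const p
  set B : ℝ := ∫ v : ℝ, Real.exp (-(1/2) * v ^ 2) * h v with hB
  set A : ℝ := ∫ v : ℝ, v * (Real.exp (-(1/2) * v ^ 2) * h v) with hA
  have hgauss_cont : Continuous fun v : ℝ => Real.exp (-(1/2) * v ^ 2) :=
    Real.continuous_exp.comp (by continuity)
  have hB_int : Integrable fun v : ℝ => Real.exp (-(1/2) * v ^ 2) * h v := by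
    apply Integrable.mono (integrable_exp_neg_mul_sq (by norm_num : (0:ℝ) < 1/2))
      (hgauss_cont.mul h_cont).aestronglyMeasurable
    filter_upwards with v
    simp only [Pi.mul_apply]
    rw [Real.norm_eq_abs, Real.norm_eq_abs,
      abs_of_pos (mul_pos (Real.exp_pos _) (h_pos v)), abs_of_pos (Real.exp_pos _)]
    exact mul_le_of_le_one_right (Real.exp_pos _).le (h_le1 v)
  have hK_int : Integrable fun v : ℝ => |v| * Real.exp (-(1/2) * v ^ 2) := by
    have := (integrable_mul_exp_neg_mul_sq (by norm_num : (0:ℝ) < 1/2)).abs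
    simpa [abs_mul, abs_of_pos (Real.exp_pos _)] using this
  have hA_int : Integrable fun v : ℝ => v * (Real.exp (-(1/2) * v ^ 2) * h v) := by
    apply Integrable.mono hK_int
      ((continuous_id.mul (hgauss_cont.mul h_cont)).aestronglyMeasurable)
    filter_upwards with v
    simp only [Pi.mul_apply, id_eq]
    rw [Real.norm_eq_abs, Real.norm_eq_abs, abs_mul,
      abs_of_pos (mul_pos (Real.exp_pos _) (h_pos v)),
      abs_of_nonneg (mul_nonneg (abs_nonneg v) (Real.exp_pos _).le)]
    exact mul_le_mul_of_nonneg_left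
      (mul_le_of_le_one_right (Real.exp_pos _).le (h_le1 v)) (abs_nonneg _)
  -- substitution formula
  have subst : ∀ F : ℝ → ℝ, (∫ x : ℝ, F x) = (q / p) * ∫ v : ℝ, F ((q / p) * v + m / p) := by
    intro F
    have h1 : (∫ v : ℝ, F ((q / p) * v + m / p)) = |(q / p)⁻¹| • ∫ u : ℝ, F (u + m / p) :=
      Measure.integral_comp_mul_left (fun u => F (u + m / p)) (q / p)
    rw [h1, integral_add_right_eq_self F (m / p), smul_eq_mul, abs_inv, abs_div,
      abs_of_pos hq, abs_of_pos hp]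
    field_simp
  -- pointwise identity
  have hiden : ∀ v : ℝ,
      Real.exp (-(y - p * ((q / p) * v + m / p)) ^ 2 / (2 * q ^ 2)) *
        Real.exp (-|(q / p) * v + m / p|)
      = C * (Real.exp (-(1/2) * v ^ 2) * h v) := by
    intro v
    have hx : p * ((q / p) * v + m / p) = q * v + m := by field_simp
    rw [hx]
    have habs : |(q / p) * v + m / p| = |q * v + m| / p := by
      rw [show (q / p) * v + m / p = (q * v + m) / p by ring, abs_div, abs_of_pos hp]
    rw [habs, hC, hh, ← Real.exp_add, ← Real.exp_add, ← Real.exp_add]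
    congr 1
    have hy' : y = m + q ^ 2 / p := by rw [hmdef]; ring
    rw [hy']
    field_simp
    ring
  have hnum : ∀ v : ℝ,
      ((q / p) * v + m / p) * Real.exp (-(y - p * ((q / p) * v + m / p)) ^ 2 / (2 * q ^ 2)) *
        Real.exp (-|(q / p) * v + m / p|)
      = C / p * ((q * v + m) * (Real.exp (-(1/2) * v ^ 2) * h v)) := by
    intro v
    rw [mul_assoc, hiden v]
    ring
  have hD : (∫ x : ℝ, Real.exp (-(y - p * x) ^ 2 / (2 * q ^ 2)) * Real.exp (-|x|))
      = (q / p) * (C * B) := by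
    rw [subst (fun x : ℝ => Real.exp (-(y - p * x) ^ 2 / (2 * q ^ 2)) * Real.exp (-|x|))]
    simp only [hiden]
    rw [integral_const_mul]
  have hN : (∫ x : ℝ, x * Real.exp (-(y - p * x) ^ 2 / (2 * q ^ 2)) * Real.exp (-|x|))
      = (q / p) * (C / p * (q * A + m * B)) := by
    rw [subst (fun x : ℝ => x * Real.exp (-(y - p * x) ^ 2 / (2 * q ^ 2)) * Real.exp (-|x|))]
    simp only [hnum]
    rw [integral_const_mul]
    congr 2
    have : (fun v : ℝ => (q * v + m) * (Real.exp (-(1/2) * v ^ 2) * h v))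
        = fun v : ℝ => q * (v * (Real.exp (-(1/2) * v ^ 2) * h v))
            + m * (Real.exp (-(1/2) * v ^ 2) * h v) := funext fun v => by ring
    rw [this, integral_add (hA_int.const_mul q) (hB_int.const_mul m),
      integral_const_mul, integral_const_mul]
  -- bounds
  have hB1 : 1 ≤ B := by
    have h1 : (∫ v in Ioi (0:ℝ), Real.exp (-(1/2) * v ^ 2) * h v) ≤ B :=
      setIntegral_le_integral hB_int
        (Filter.Eventually.of_forall fun v => mul_nonneg (Real.exp_pos _).le (h_pos v).le)
    have h2 : (∫ v in Ioi (0:ℝ), Real.exp (-(1/2) * v ^ 2) * h v)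
        = ∫ v in Ioi (0:ℝ), Real.exp (-(1/2) * v ^ 2) := by
      apply setIntegral_congr_fun measurableSet_Ioi
      intro v hv
      have hv' : 0 < q * v + m := add_pos (mul_pos hq hv) hm
      simp [hh, abs_of_pos hv']
    have h3 : (∫ v in Ioi (0:ℝ), Real.exp (-(1/2) * v ^ 2)) = Real.sqrt (Real.pi / (1/2)) / 2 :=
      integral_gaussian_Ioi (1/2)
    have h4 : (1:ℝ) ≤ Real.sqrt (Real.pi / (1/2)) / 2 := by
      nlinarith [Real.sq_sqrt (show (0:ℝ) ≤ Real.pi / (1/2) by positivity),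
        Real.sqrt_nonneg (Real.pi / (1/2)), Real.pi_gt_three]
    rw [h2, h3] at h1
    linarith
  have hBpos : (0:ℝ) < B := lt_of_lt_of_le one_pos hB1
  have hAle : |A| ≤ lapK := by
    have h1 : |A| ≤ ∫ v : ℝ, |v * (Real.exp (-(1/2) * v ^ 2) * h v)| :=
      norm_integral_le_integral_norm (fun v : ℝ => v * (Real.exp (-(1/2) * v ^ 2) * h v))
    have h2 : (∫ v : ℝ, |v * (Real.exp (-(1/2) * v ^ 2) * h v)|)
        ≤ ∫ v : ℝ, |v| * Real.exp (-(1/2) * v ^ 2) := by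
      apply integral_mono hA_int.abs hK_int
      intro v
      dsimp only
      rw [abs_mul, abs_of_pos (mul_pos (Real.exp_pos _) (h_pos v))]
      exact mul_le_mul_of_nonneg_left
        (mul_le_of_le_one_right (Real.exp_pos _).le (h_le1 v)) (abs_nonneg _)
    exact h1.trans h2
  -- final computation
  have hCpos : (0:ℝ) < C := Real.exp_pos _
  have hval : p * lapCondExp p q y = m + q * (A / B) := by
    rw [lapCondExp, hN, hD]
    field_simp
    ring
  rw [hval, add_sub_cancel_left, abs_mul, abs_of_pos hq, abs_div, abs_of_pos hBpos]
  have h5 : |A| / B ≤ |A| := div_le_self (abs_nonneg A) hB1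
  have h6 : |A| / B ≤ lapK := h5.trans hAle
  exact mul_le_mul_of_nonneg_left h6 hq.le

lemma lapCondExp_neg (p q y : ℝ) : lapCondExp p q (-y) = -lapCondExp p q y := by
  have h1 : (∫ x : ℝ, x * Real.exp (-(-y - p * x) ^ 2 / (2 * q ^ 2)) * Real.exp (-|x|))
      = -∫ x : ℝ, x * Real.exp (-(y - p * x) ^ 2 / (2 * q ^ 2)) * Real.exp (-|x|) := by
    rw [← integral_neg_eq_self
      (fun x : ℝ => x * Real.exp (-(-y - p * x) ^ 2 / (2 * q ^ 2)) * Real.exp (-|x|)) volume]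
    rw [show (fun x : ℝ => (-x) * Real.exp (-(-y - p * -x) ^ 2 / (2 * q ^ 2)) * Real.exp (-|(-x)|))
        = fun x : ℝ => -(x * Real.exp (-(y - p * x) ^ 2 / (2 * q ^ 2)) * Real.exp (-|x|)) from
      funext fun x => by
        rw [abs_neg, show (-y - p * -x) = -(y - p * x) by ring, neg_sq]; ring]
    rw [integral_neg]
  have h2 : (∫ x : ℝ, Real.exp (-(-y - p * x) ^ 2 / (2 * q ^ 2)) * Real.exp (-|x|))
      = ∫ x : ℝ, Real.exp (-(y - p * x) ^ 2 / (2 * q ^ 2)) * Real.exp (-|x|) := by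
    rw [← integral_neg_eq_self
      (fun x : ℝ => Real.exp (-(-y - p * x) ^ 2 / (2 * q ^ 2)) * Real.exp (-|x|)) volume]
    congr 1
    funext x
    rw [abs_neg, show (-y - p * -x) = -(y - p * x) by ring, neg_sq]
  rw [lapCondExp, lapCondExp, h1, h2, neg_div]

lemma lap_aux (c y₀ : ℝ) (p q y : ℝ → ℝ) (l : Filter ℝ) [l.NeBot]
    (hp : ∀ᶠ t in l, 0 < p t) (hq : ∀ᶠ t in l, 0 < q t)
    (hq0 : Tendsto q l (𝓝 0)) (hc : Tendsto (fun t => q t ^ 2 / p t) l (𝓝 c))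
    (hy : Tendsto y l (𝓝 y₀)) (hcy : c < y₀) :
    Tendsto (fun t => p t * lapCondExp (p t) (q t) (y t)) l (𝓝 (y₀ - c)) := by
  have hm : Tendsto (fun t => y t - q t ^ 2 / p t) l (𝓝 (y₀ - c)) := hy.sub hc
  have hmp : ∀ᶠ t in l, 0 < y t - q t ^ 2 / p t :=
    hm.eventually (eventually_gt_nhds (by linarith))
  have hkey : ∀ᶠ t in l,
      |p t * lapCondExp (p t) (q t) (y t) - (y t - q t ^ 2 / p t)| ≤ q t * lapK := by
    filter_upwards [hp, hq, hmp] with t h1 h2 h3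
    exact key (p t) (q t) (y t) h1 h2 h3
  have hqK : Tendsto (fun t => q t * lapK) l (𝓝 0) := by
    simpa using hq0.mul_const lapK
  have hlow : Tendsto (fun t => (y t - q t ^ 2 / p t) - q t * lapK) l (𝓝 (y₀ - c)) := by
    simpa using hm.sub hqK
  have hhigh : Tendsto (fun t => (y t - q t ^ 2 / p t) + q t * lapK) l (𝓝 (y₀ - c)) := by
    simpa using hm.add hqK
  apply tendsto_of_tendsto_of_tendsto_of_le_of_le' hlow hhigh
  · filter_upwards [hkey] with t ht
    have := abs_le.mp ht
    linarith [this.1]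
  · filter_upwards [hkey] with t ht
    have := abs_le.mp ht
    linarith [(abs_le.mp ht).2]


/-- with `q(t)²/p(t) → c` and `y(t) → y₀`, `|y₀| > c`, one has
`p(t) E[X | p(t)X + q(t)Z = y(t)] → (1 − c/|y₀|) y₀` as `t → 0⁺`. -/
theorem laplace_cond_exp_limit (T ε c y₀ : ℝ) (hT : 0 < T) (hε : 0 < ε)
    (p q : ℝ → ℝ)
    (hpc : ContinuousOn p (Icc 0 T)) (hqc : ContinuousOn q (Icc 0 T))
    (hpnn : ∀ t ∈ Icc (0:ℝ) T, 0 ≤ p t) (hqnn : ∀ t ∈ Icc (0:ℝ) T, 0 ≤ q t)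
    (hp0 : p 0 = 0) (hq0 : q 0 = 0)
    (hpos : ∀ t ∈ Ioo (0:ℝ) ε, 0 < p t ∧ 0 < q t)
    (hc : Tendsto (fun t => q t ^ 2 / p t) (𝓝[>] 0) (𝓝 c))
    (y : ℝ → ℝ) (hyc : ContinuousOn y (Icc 0 T))
    (hy0 : Tendsto y (𝓝[>] 0) (𝓝 y₀)) (hy₀ : c < |y₀|) :
    Tendsto (fun t => p t * lapCondExp (p t) (q t) (y t)) (𝓝[>] 0)
      (𝓝 ((1 - c / |y₀|) * y₀)) := by

  have hIoo : Ioo (0:ℝ) ε ∈ 𝓝[>] (0:ℝ) :=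
    Ioo_mem_nhdsGT_of_mem (by constructor <;> [exact le_rfl; exact hε])
  have hp_pos : ∀ᶠ t in 𝓝[>] (0:ℝ), 0 < p t :=
    eventually_of_mem hIoo fun t ht => (hpos t ht).1
  have hq_pos : ∀ᶠ t in 𝓝[>] (0:ℝ), 0 < q t :=
    eventually_of_mem hIoo fun t ht => (hpos t ht).2
  have hq_to0 : Tendsto q (𝓝[>] (0:ℝ)) (𝓝 0) := by
    have h1 : Tendsto q (𝓝[Icc 0 T] (0:ℝ)) (𝓝 0) := by
      have := hqc 0 ⟨le_rfl, hT.le⟩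
      rw [ContinuousWithinAt, hq0] at this
      exact this
    have h2 : Tendsto q (𝓝[Ioo 0 T] (0:ℝ)) (𝓝 0) :=
      h1.mono_left (nhdsWithin_mono 0 Ioo_subset_Icc_self)
    rwa [nhdsWithin_Ioo_eq_nhdsGT hT] at h2
  have hc0 : 0 ≤ c :=
    ge_of_tendsto hc (eventually_of_mem hIoo fun t ht =>
      div_nonneg (sq_nonneg _) (hpos t ht).1.le)
  have hy0ne : y₀ ≠ 0 := by
    intro h
    rw [h, abs_zero] at hy₀
    linarith
  rcases hy0ne.lt_or_gt with hneg | hposy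
  · -- y₀ < 0
    have habs : |y₀| = -y₀ := abs_of_neg hneg
    have haux := lap_aux c (-y₀) p q (fun t => -(y t)) (𝓝[>] (0:ℝ)) hp_pos hq_pos hq_to0 hc
      hy0.neg (by rw [habs] at hy₀; exact hy₀)
    have heq : ∀ t, p t * lapCondExp (p t) (q t) (-(y t))
        = -(p t * lapCondExp (p t) (q t) (y t)) := by
      intro t; rw [lapCondExp_neg]; ring
    simp only [heq] at haux
    have hkey2 : (1 - c / |y₀|) * y₀ = -(-y₀ - c) := by
      rw [habs, div_neg, sub_neg_eq_add, add_mul, one_mul, div_mul_cancel₀ c hy0ne]; ring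
    rw [hkey2]
    simpa using haux.neg
  · have habs : |y₀| = y₀ := abs_of_pos hposy
    have haux := lap_aux c y₀ p q y (𝓝[>] (0:ℝ)) hp_pos hq_pos hq_to0 hc hy0
      (by rwa [habs] at hy₀)
    have hkey2 : (1 - c / |y₀|) * y₀ = y₀ - c := by
      rw [habs, sub_mul, one_mul, div_mul_cancel₀ c hy0ne]
    rw [hkey2]
    exact haux
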